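/- arXiv:0910.0747 — 4 statements merged into one kernel-verified Lean document; each statement's English description precedes it below -/
import Mathlib

section
/- Reflexivity of algorithmic subtyping in System F<:: if the type T is well-formed in the context Γ, then Γ ⊢ T <: T. -/
inductive FTy : Type
  | tvar : ℕ → FTy
  | top : FTy
  | arr : FTy → FTy → FTy
  | all : FTy → FTy → FTy

def liftRen (ρ : ℕ → ℕ) : ℕ → ℕ
  | 0 => 0
  | n + 1 => ρ n + 1

/-- Apply a renaming to the free type variables of a type. -/
def tyRename (ρ : ℕ → ℕ) : FTy → FTy
  | FTy.tvar n => FTy.tvar (ρ n)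
  | FTy.top => FTy.top
  | FTy.arr a b => FTy.arr (tyRename ρ a) (tyRename ρ b)
  | FTy.all a b => FTy.all (tyRename ρ a) (tyRename (liftRen ρ) b)

/-- Shift all free type variables up by `k`. -/
def shiftUp (k : ℕ) : FTy → FTy := tyRename (· + k)

/-- Algorithmic subtyping for System F<:. -/
inductive Subty : List FTy → FTy → FTy → Prop
  | top {Γ : List FTy} {S : FTy} : Subty Γ S FTy.top
  | refl {Γ : List FTy} {i : ℕ} : i < Γ.length → Subty Γ (FTy.tvar i) (FTy.tvar i)
  | trans {Γ : List FTy} {i : ℕ} {U T : FTy} :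
      Γ[i]? = some U → Subty Γ (shiftUp (i + 1) U) T → Subty Γ (FTy.tvar i) T
  | arrow {Γ : List FTy} {S₁ S₂ T₁ T₂ : FTy} :
      Subty Γ T₁ S₁ → Subty Γ S₂ T₂ → Subty Γ (FTy.arr S₁ S₂) (FTy.arr T₁ T₂)
  | all {Γ : List FTy} {S₁ S₂ T₁ T₂ : FTy} :
      Subty Γ T₁ S₁ → Subty (T₁ :: Γ) S₂ T₂ → Subty Γ (FTy.all S₁ S₂) (FTy.all T₁ T₂)

/-- `WF n T` holds when every free type variable of `T` is less than `n`. -/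
def WF (n : ℕ) : FTy → Prop
  | FTy.tvar i => i < n
  | FTy.top => True
  | FTy.arr a b => WF n a ∧ WF n b
  | FTy.all a b => WF n a ∧ WF (n + 1) b

theorem sub_refl (Γ : List FTy) (T : FTy) (h : WF Γ.length T) : Subty Γ T T := by
  induction T generalizing Γ with
  | tvar i => exact Subty.refl h
  | top => exact Subty.top
  | arr a b ih1 ih2 => exact Subty.arrow (ih1 Γ h.1) (ih2 Γ h.2)
  | all a b ih1 ih2 => exact Subty.all (ih1 Γ h.1) (ih2 (a :: Γ) h.2)
end

section
/- Transitivity of algorithmic subtyping in System F<:: if Γ ⊢ S <: Q and Γ ⊢ Q <: T, then Γ ⊢ S <: T. -/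
lemma tyRename_congr {ρ σ : ℕ → ℕ} (h : ∀ n, ρ n = σ n) : ∀ T, tyRename ρ T = tyRename σ T
  | FTy.tvar n => by simp [tyRename, h]
  | FTy.top => rfl
  | FTy.arr a b => by simp [tyRename, tyRename_congr h a, tyRename_congr h b]
  | FTy.all a b => by
      have h' : ∀ n, liftRen ρ n = liftRen σ n := by
        intro n; cases n <;> simp [liftRen, h]
      simp [tyRename, tyRename_congr h a, tyRename_congr h' b]

lemma tyRename_comp (σ τ : ℕ → ℕ) :
    ∀ T, tyRename σ (tyRename τ T) = tyRename (fun n => σ (τ n)) T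
  | FTy.tvar n => rfl
  | FTy.top => rfl
  | FTy.arr a b => by simp [tyRename, tyRename_comp σ τ a, tyRename_comp σ τ b]
  | FTy.all a b => by
      simp only [tyRename]
      rw [tyRename_comp σ τ a, tyRename_comp (liftRen σ) (liftRen τ) b]
      congr 1
      exact tyRename_congr (fun n => by cases n <;> simp [liftRen]) b

lemma shiftUp_shiftUp (a b : ℕ) (T : FTy) : shiftUp a (shiftUp b T) = shiftUp (b + a) T := by
  unfold shiftUp
  rw [tyRename_comp]
  exact tyRename_congr (fun n => by omega) T

def siz : FTy → ℕ
  | FTy.tvar _ => 1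
  | FTy.top => 1
  | FTy.arr a b => siz a + siz b + 1
  | FTy.all a b => siz a + siz b + 1

lemma siz_pos : ∀ T, 0 < siz T
  | FTy.tvar _ => by simp [siz]
  | FTy.top => by simp [siz]
  | FTy.arr _ _ => by simp [siz]
  | FTy.all _ _ => by simp [siz]

lemma siz_rename (ρ : ℕ → ℕ) : ∀ T, siz (tyRename ρ T) = siz T
  | FTy.tvar _ => rfl
  | FTy.top => rfl
  | FTy.arr a b => by simp [tyRename, siz, siz_rename ρ a, siz_rename ρ b]
  | FTy.all a b => by simp [tyRename, siz, siz_rename ρ a, siz_rename (liftRen ρ) b]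

def RenOk (ρ : ℕ → ℕ) (Γ Δ : List FTy) : Prop :=
  (∀ i, i < Γ.length → ρ i < Δ.length) ∧
  (∀ i U, Γ[i]? = some U →
    ∃ V, Δ[ρ i]? = some V ∧ shiftUp (ρ i + 1) V = tyRename ρ (shiftUp (i + 1) U))

lemma RenOk.lift {ρ : ℕ → ℕ} {Γ Δ : List FTy} (h : RenOk ρ Γ Δ) (A : FTy) :
    RenOk (liftRen ρ) (A :: Γ) (tyRename ρ A :: Δ) := by
  obtain ⟨hlen, hget⟩ := h
  constructor
  · intro i hi
    cases i with
    | zero => simp [liftRen]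
    | succ n =>
      simp only [List.length_cons] at hi ⊢
      simp only [liftRen]
      exact Nat.succ_lt_succ (hlen n (Nat.lt_of_succ_lt_succ hi))
  · intro i U hU
    cases i with
    | zero =>
      simp only [List.getElem?_cons_zero] at hU
      cases hU
      refine ⟨tyRename ρ A, rfl, ?_⟩
      unfold shiftUp
      rw [tyRename_comp, tyRename_comp]
      exact tyRename_congr (fun n => by simp [liftRen]) A
    | succ n =>
      simp only [List.getElem?_cons_succ] at hU
      obtain ⟨V, hV, hEq⟩ := hget n U hU
      refine ⟨V, by simpa [liftRen] using hV, ?_⟩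
      have h1 : shiftUp (liftRen ρ (n + 1) + 1) V = shiftUp 1 (shiftUp (ρ n + 1) V) := by
        rw [shiftUp_shiftUp]; simp [liftRen]
      rw [h1, hEq]
      unfold shiftUp
      rw [tyRename_comp, tyRename_comp, tyRename_comp]
      exact tyRename_congr (fun m => by simp [liftRen]) U

lemma sub_rename {Γ : List FTy} {S T : FTy} (h : Subty Γ S T) :
    ∀ {ρ : ℕ → ℕ} {Δ : List FTy}, RenOk ρ Γ Δ → Subty Δ (tyRename ρ S) (tyRename ρ T) := by
  induction h with
  | top => intro ρ Δ _; exact Subty.top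
  | refl hi =>
    intro ρ Δ hok
    exact Subty.refl (hok.1 _ hi)
  | trans hget _ ih =>
    intro ρ Δ hok
    obtain ⟨V, hV, hEq⟩ := hok.2 _ _ hget
    exact Subty.trans hV (by rw [hEq]; exact ih hok)
  | arrow _ _ ih₁ ih₂ =>
    intro ρ Δ hok
    exact Subty.arrow (ih₁ hok) (ih₂ hok)
  | all _ _ ih₁ ih₂ =>
    intro ρ Δ hok
    exact Subty.all (ih₁ hok) (ih₂ (hok.lift _))

lemma sub_weaken1 {Γ : List FTy} {S T : FTy} (E : FTy) (h : Subty Γ S T) :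
    Subty (E :: Γ) (shiftUp 1 S) (shiftUp 1 T) := by
  refine sub_rename h ⟨fun i hi => by simpa using hi, fun i U hU => ⟨U, hU, ?_⟩⟩
  unfold shiftUp
  rw [tyRename_comp]
  exact tyRename_congr (fun n => by show n + (i + 1 + 1) = n + (i + 1) + 1; omega) U

lemma tyRename_id : ∀ T, tyRename (fun n => n) T = T
  | FTy.tvar _ => rfl
  | FTy.top => rfl
  | FTy.arr a b => by simp [tyRename, tyRename_id a, tyRename_id b]
  | FTy.all a b => by
    simp only [tyRename, tyRename_id a]
    rw [tyRename_congr (σ := fun n => n) (fun n => by cases n <;> simp [liftRen]) b,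
      tyRename_id b]

lemma shiftUp_zero (T : FTy) : shiftUp 0 T = T := by
  have h := tyRename_congr (ρ := (· + 0)) (σ := fun n => n) (fun n => Nat.add_zero n) T
  unfold shiftUp
  rw [h, tyRename_id]

lemma sub_weaken_many {Γ : List FTy} {S T : FTy} (h : Subty Γ S T) :
    ∀ Δ : List FTy, Subty (Δ ++ Γ) (shiftUp Δ.length S) (shiftUp Δ.length T) := by
  intro Δ
  induction Δ with
  | nil => simpa [shiftUp_zero] using h
  | cons E Δ ih =>
    have h1 := sub_weaken1 E ih
    rw [shiftUp_shiftUp, shiftUp_shiftUp] at h1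
    simpa using h1

lemma main : ∀ n : ℕ,
    (∀ Q : FTy, siz Q ≤ n → ∀ Γ S T, Subty Γ S Q → Subty Γ Q T → Subty Γ S T) ∧
    (∀ Q : FTy, siz Q ≤ n → ∀ Γ M N, Subty Γ M N →
      ∀ Δ Γ₀ P, Γ = Δ ++ Q :: Γ₀ → Subty Γ₀ P Q → Subty (Δ ++ P :: Γ₀) M N) := by
  intro n
  induction n with
  | zero =>
    refine ⟨fun Q hQ => absurd (siz_pos Q) (by omega), fun Q hQ => absurd (siz_pos Q) (by omega)⟩
  | succ n ih =>
    have tr : ∀ Q : FTy, siz Q ≤ n + 1 → ∀ Γ S T, Subty Γ S Q → Subty Γ Q T → Subty Γ S T := by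
      intro Q hQ Γ S T h₁ h₂
      induction h₁ generalizing T with
      | top => cases h₂; exact Subty.top
      | refl hi => exact h₂
      | trans hget _ ihd => exact Subty.trans hget (ihd hQ _ h₂)
      | arrow ha hb iha ihb =>
        rename_i Γ' S₁ S₂ Q₁ Q₂
        cases h₂ with
        | top => exact Subty.top
        | arrow hc hd =>
          have hs : siz (FTy.arr Q₁ Q₂) = siz Q₁ + siz Q₂ + 1 := rfl
          have h1 : siz Q₁ ≤ n := by have := siz_pos Q₂; omega
          have h2 : siz Q₂ ≤ n := by have := siz_pos Q₁; omega
          exact Subty.arrow ((ih.1 Q₁ h1) _ _ _ hc ha) ((ih.1 Q₂ h2) _ _ _ hb hd)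
      | all ha hb iha ihb =>
        rename_i Γ' S₁ S₂ Q₁ Q₂
        cases h₂ with
        | top => exact Subty.top
        | all hc hd =>
          rename_i T₁ T₂
          have hs : siz (FTy.all Q₁ Q₂) = siz Q₁ + siz Q₂ + 1 := rfl
          have h1 : siz Q₁ ≤ n := by have := siz_pos Q₂; omega
          have h2 : siz Q₂ ≤ n := by have := siz_pos Q₁; omega
          have hnarrow : Subty (T₁ :: Γ') S₂ Q₂ :=
            (ih.2 Q₁ h1) _ _ _ hb [] Γ' T₁ rfl hc
          exact Subty.all ((ih.1 Q₁ h1) _ _ _ hc ha)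
            ((ih.1 Q₂ h2) _ _ _ hnarrow hd)
    refine ⟨tr, ?_⟩
    intro Q hQ Γ M N h Δ Γ₀ P hΓ hPQ
    induction h generalizing Δ with
    | top => exact Subty.top
    | refl hi =>
      subst hΓ
      refine Subty.refl ?_
      simpa using hi
    | trans hget hd ihd =>
      subst hΓ
      rename_i i U NT
      rcases lt_trichotomy i Δ.length with hlt | heq | hgt
      · have hg2 : (Δ ++ Q :: Γ₀)[i]? = Δ[i]? := List.getElem?_append_left hlt
        have hg3 : (Δ ++ P :: Γ₀)[i]? = Δ[i]? := List.getElem?_append_left hlt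
        exact Subty.trans (by rw [hg3, ← hg2]; exact hget) (ihd Δ rfl)
      · have hg2 : (Δ ++ Q :: Γ₀)[i]? = some Q := by
          rw [List.getElem?_append_right (le_of_eq heq.symm)]
          simp [heq]
        have hU : U = Q := by rw [hget] at hg2; exact (Option.some.inj hg2)
        subst hU
        have hg3 : (Δ ++ P :: Γ₀)[i]? = some P := by
          rw [List.getElem?_append_right (le_of_eq heq.symm)]
          simp [heq]
        have hweak : Subty ((Δ ++ [P]) ++ Γ₀) (shiftUp (Δ ++ [P]).length P)
            (shiftUp (Δ ++ [P]).length U) := sub_weaken_many hPQ (Δ ++ [P])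
        have hlen : (Δ ++ [P]).length = i + 1 := by simp [heq]
        rw [hlen] at hweak
        have hctx : (Δ ++ [P]) ++ Γ₀ = Δ ++ P :: Γ₀ := by simp
        rw [hctx] at hweak
        have hcut : Subty (Δ ++ P :: Γ₀) (shiftUp (i + 1) U) NT := ihd Δ rfl
        have hsiz : siz (shiftUp (i + 1) U) ≤ n + 1 := by
          unfold shiftUp; rw [siz_rename]; exact hQ
        exact Subty.trans hg3 (tr _ hsiz _ _ _ hweak hcut)
      · have hle2 : Δ.length ≤ i := le_of_lt hgt
        have hg2 : (Δ ++ Q :: Γ₀)[i]? = (Q :: Γ₀)[i - Δ.length]? :=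
          List.getElem?_append_right hle2
        have hg3 : (Δ ++ P :: Γ₀)[i]? = (P :: Γ₀)[i - Δ.length]? :=
          List.getElem?_append_right hle2
        have hpos : i - Δ.length ≠ 0 := by omega
        obtain ⟨k, hk⟩ := Nat.exists_eq_succ_of_ne_zero hpos
        have hq : (Q :: Γ₀)[i - Δ.length]? = Γ₀[k]? := by rw [hk]; rfl
        have hp : (P :: Γ₀)[i - Δ.length]? = Γ₀[k]? := by rw [hk]; rfl
        refine Subty.trans ?_ (ihd Δ rfl)
        rw [hg3, hp, ← hq, ← hg2]
        exact hget
    | arrow ha hb iha ihb =>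
      subst hΓ
      exact Subty.arrow (iha Δ rfl) (ihb Δ rfl)
    | all ha hb iha ihb =>
      subst hΓ
      rename_i S₁ S₂ T₁ T₂
      exact Subty.all (iha Δ rfl) (ihb (T₁ :: Δ) rfl)

theorem sub_trans {Γ : List FTy} {S Q T : FTy}
    (h₁ : Subty Γ S Q) (h₂ : Subty Γ Q T) : Subty Γ S T :=
  (main (siz Q)).1 Q le_rfl Γ S T h₁ h₂
end

section
/- Narrowing for algorithmic subtyping in System F<:: if (Δ ++ Q :: Γ) ⊢ M <: N and Γ ⊢ P <: Q, then (Δ ++ P :: Γ) ⊢ M <: N. -/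
section Aux

/-- Size of a type, for the induction measure. -/
def fsz : FTy → ℕ
  | FTy.tvar _ => 1
  | FTy.top => 1
  | FTy.arr a b => fsz a + fsz b + 1
  | FTy.all a b => fsz a + fsz b + 1

lemma fsz_pos (A : FTy) : 0 < fsz A := by cases A <;> simp [fsz]

lemma fsz_rename (A : FTy) : ∀ ρ, fsz (tyRename ρ A) = fsz A := by
  induction A <;> intro ρ <;> simp [tyRename, fsz, *]

lemma liftRen_comp (ρ σ : ℕ → ℕ) : liftRen ρ ∘ liftRen σ = liftRen (ρ ∘ σ) := by
  funext n; cases n <;> simp [liftRen, Function.comp]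

lemma rename_rename (A : FTy) : ∀ ρ σ, tyRename ρ (tyRename σ A) = tyRename (ρ ∘ σ) A := by
  induction A <;> intro ρ σ <;> simp [tyRename, Function.comp, *, liftRen_comp]

/-- `ρ` is a valid context renaming from `Γ` to `Γ'`. -/
def OkRen (ρ : ℕ → ℕ) (Γ Γ' : List FTy) : Prop :=
  (∀ n, n < Γ.length → ρ n < Γ'.length) ∧
  (∀ n U, Γ[n]? = some U → ∃ U', Γ'[ρ n]? = some U' ∧
      tyRename ρ (shiftUp (n + 1) U) = shiftUp (ρ n + 1) U')

lemma okRen_cons {ρ : ℕ → ℕ} {Γ Γ' : List FTy} (h : OkRen ρ Γ Γ') (T : FTy) :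
    OkRen (liftRen ρ) (T :: Γ) (tyRename ρ T :: Γ') := by
  constructor
  · intro n hn
    cases n with
    | zero => simp [liftRen]
    | succ n =>
      simp only [liftRen, List.length_cons]
      exact Nat.succ_lt_succ (h.1 n (Nat.lt_of_succ_lt_succ hn))
  · intro n U hU
    cases n with
    | zero =>
      simp only [List.getElem?_cons_zero] at hU
      cases hU
      refine ⟨tyRename ρ T, by simp [liftRen], ?_⟩
      simp only [shiftUp, rename_rename]
      congr 1
    | succ n =>
      simp only [List.getElem?_cons_succ] at hU
      obtain ⟨U', hget, heq⟩ := h.2 n U hU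
      refine ⟨U', by simpa [liftRen] using hget, ?_⟩
      simp only [shiftUp, rename_rename] at heq ⊢
      have e1 : (liftRen ρ ∘ fun x => x + (n + 1 + 1)) =
          (fun x => x + 1) ∘ (ρ ∘ fun x => x + (n + 1)) := by
        funext m
        show liftRen ρ (m + (n + 1) + 1) = ρ (m + (n + 1)) + 1
        rfl
      rw [e1, ← rename_rename, heq, rename_rename]
      congr 1

lemma rename_sub {Γ : List FTy} {S T : FTy} (h : Subty Γ S T) :
    ∀ {ρ Γ'}, OkRen ρ Γ Γ' → Subty Γ' (tyRename ρ S) (tyRename ρ T) := by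
  induction h with
  | top => intro ρ Γ' _; exact Subty.top
  | refl hi => intro ρ Γ' hok; exact Subty.refl (hok.1 _ hi)
  | trans hget _ ih =>
    intro ρ Γ' hok
    obtain ⟨U', hget', heq⟩ := hok.2 _ _ hget
    exact Subty.trans hget' (heq ▸ ih hok)
  | arrow _ _ ih1 ih2 =>
    intro ρ Γ' hok; exact Subty.arrow (ih1 hok) (ih2 hok)
  | all _ _ ih1 ih2 =>
    intro ρ Γ' hok
    exact Subty.all (ih1 hok) (ih2 (okRen_cons hok _))

lemma okRen_weaken (E Γ : List FTy) : OkRen (· + E.length) Γ (E ++ Γ) := by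
  constructor
  · intro n hn; simp [List.length_append]; omega
  · intro n U hU
    refine ⟨U, ?_, ?_⟩
    · show (E ++ Γ)[n + E.length]? = some U
      rw [List.getElem?_append_right (Nat.le_add_left _ _)]
      simpa using hU
    · simp only [shiftUp, rename_rename]
      congr 1
      funext m; simp [Function.comp]; omega

lemma weaken {Γ : List FTy} {S T : FTy} (h : Subty Γ S T) (E : List FTy) :
    Subty (E ++ Γ) (shiftUp E.length S) (shiftUp E.length T) :=
  rename_sub h (okRen_weaken E Γ)

/-- Transitivity and narrowing, by induction on the size of the middle type. -/
lemma trans_narrow : ∀ k : ℕ,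
    (∀ Q, fsz Q ≤ k → ∀ Γ S T, Subty Γ S Q → Subty Γ Q T → Subty Γ S T) ∧
    (∀ Q, fsz Q ≤ k → ∀ Γ P, Subty Γ P Q → ∀ Δ M N,
      Subty (Δ ++ Q :: Γ) M N → Subty (Δ ++ P :: Γ) M N) := by
  intro k
  induction k with
  | zero =>
    constructor <;> intro Q hQ <;> exact absurd hQ (by have := fsz_pos Q; omega)
  | succ k ih =>
    have htrans : ∀ Q, fsz Q ≤ k + 1 → ∀ Γ S T, Subty Γ S Q → Subty Γ Q T → Subty Γ S T := by
      intro Q hQ Γ S T h1 h2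
      revert h2 hQ
      induction h1 generalizing T with
      | top =>
        intro _ h2
        cases h2
        exact Subty.top
      | refl hi => intro _ h2; exact h2
      | trans hget _ ihd => intro hQ h2; exact Subty.trans hget (ihd _ hQ h2)
      | @arrow Γ₀ S1 S2 Q1 Q2 hq1 hq2 _ _ =>
        intro hQ h2
        have h1 : fsz Q1 ≤ k := by have := fsz_pos Q2; simp [fsz] at hQ; omega
        have h2' : fsz Q2 ≤ k := by have := fsz_pos Q1; simp [fsz] at hQ; omega
        cases h2 with
        | top => exact Subty.top
        | arrow ht1 ht2 =>
          exact Subty.arrow (ih.1 Q1 h1 _ _ _ ht1 hq1) (ih.1 Q2 h2' _ _ _ hq2 ht2)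
      | @all Γ₀ S1 S2 Q1 Q2 hq1 hq2 _ _ =>
        intro hQ h2
        have h1 : fsz Q1 ≤ k := by have := fsz_pos Q2; simp [fsz] at hQ; omega
        have h2' : fsz Q2 ≤ k := by have := fsz_pos Q1; simp [fsz] at hQ; omega
        cases h2 with
        | top => exact Subty.top
        | @all _ _ _ T1 T2 ht1 ht2 =>
          refine Subty.all (ih.1 Q1 h1 _ _ _ ht1 hq1) ?_
          have hnarrow : Subty ([] ++ T1 :: Γ₀) S2 Q2 :=
            ih.2 Q1 h1 Γ₀ T1 ht1 [] S2 Q2 hq2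
          exact ih.1 Q2 h2' _ _ _ hnarrow ht2
    refine ⟨htrans, ?_⟩
    intro Q hQ Γ P hPQ Δ M N h
    have key : ∀ E M N, Subty E M N → ∀ Δ', E = Δ' ++ Q :: Γ →
        Subty (Δ' ++ P :: Γ) M N := by
      intro E M N h
      induction h with
      | top => intro Δ' hE; exact Subty.top
      | @refl Γ₀ i hi =>
        intro Δ' hE; subst hE
        refine Subty.refl ?_
        simpa [List.length_append] using hi
      | @trans Γ₀ i U T hget hU ihd =>
        intro Δ' hE; subst hE
        rcases lt_trichotomy i Δ'.length with hlt | heqi | hgt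
        · refine Subty.trans (U := U) ?_ (ihd Δ' rfl)
          rw [List.getElem?_append_left hlt] at hget ⊢
          exact hget
        · subst heqi
          have hUQ : U = Q := by
            rw [List.getElem?_append_right (le_refl _)] at hget
            exact (by simpa using hget : Q = U).symm
          have hQN := ihd Δ' rfl
          rw [hUQ] at hQN
          have hw : Subty ((Δ' ++ [P]) ++ Γ) (shiftUp (Δ' ++ [P]).length P)
              (shiftUp (Δ' ++ [P]).length Q) := weaken hPQ (Δ' ++ [P])
          rw [List.append_assoc] at hw
          simp only [List.length_append, List.length_singleton, List.singleton_append] at hw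
          refine Subty.trans (U := P) ?_ ?_
          · rw [List.getElem?_append_right (le_refl _)]; simp
          · refine htrans (shiftUp (Δ'.length + 1) Q) ?_ _ _ _ hw hQN
            simpa [shiftUp, fsz_rename] using hQ
        · refine Subty.trans (U := U) ?_ (ihd Δ' rfl)
          rw [List.getElem?_append_right (by omega)] at hget ⊢
          rw [show i - Δ'.length = (i - Δ'.length - 1) + 1 by omega] at hget ⊢
          simpa using hget
      | arrow _ _ ih1 ih2 =>
        intro Δ' hE; exact Subty.arrow (ih1 Δ' hE) (ih2 Δ' hE)
      | @all Γ₀ S1 S2 T1 T2 _ _ ih1 ih2 =>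
        intro Δ' hE
        exact Subty.all (ih1 Δ' hE) (ih2 (T1 :: Δ') (by rw [hE]; rfl))
    exact key _ _ _ h Δ rfl

end Aux

theorem sub_narrowing {Γ Δ : List FTy} {P Q M N : FTy}
    (h₁ : Subty (Δ ++ Q :: Γ) M N) (h₂ : Subty Γ P Q) :
    Subty (Δ ++ P :: Γ) M N :=
  (trans_narrow (fsz Q)).2 Q (le_refl _) Γ P h₂ Δ M N h₁
end

section
/- (CR 1) Every reducible term is strongly normalizing: if Red M A, then SN M. -/
inductive Ty : Type
  | iota : Ty
  | arr : Ty → Ty → Ty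

inductive Tm : Type
  | var : ℕ → Tm
  | const : Tm
  | app : Tm → Tm → Tm
  | abs : Ty → Tm → Tm

def rename (ρ : ℕ → ℕ) : Tm → Tm
  | Tm.var n => Tm.var (ρ n)
  | Tm.const => Tm.const
  | Tm.app m n => Tm.app (rename ρ m) (rename ρ n)
  | Tm.abs a r => Tm.abs a (rename (liftRen ρ) r)

def liftSub (σ : ℕ → Tm) : ℕ → Tm
  | 0 => Tm.var 0
  | n + 1 => rename Nat.succ (σ n)

/-- Simultaneous capture-avoiding substitution. -/
def subst (σ : ℕ → Tm) : Tm → Tm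
  | Tm.var n => σ n
  | Tm.const => Tm.const
  | Tm.app m n => Tm.app (subst σ m) (subst σ n)
  | Tm.abs a r => Tm.abs a (subst (liftSub σ) r)

/-- `subst0 s t` is `t[0 := s]`. -/
def subst0 (s : Tm) (t : Tm) : Tm :=
  subst (fun n => match n with | 0 => s | Nat.succ k => Tm.var k) t

inductive Typed : List Ty → Tm → Ty → Prop
  | var {Γ : List Ty} {n : ℕ} {a : Ty} :
      Γ[n]? = some a → Typed Γ (Tm.var n) a
  | const {Γ : List Ty} {a : Ty} : Typed Γ Tm.const a
  | app {Γ : List Ty} {m n : Tm} {a b : Ty} :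
      Typed Γ m (Ty.arr a b) → Typed Γ n a → Typed Γ (Tm.app m n) b
  | abs {Γ : List Ty} {r : Tm} {a b : Ty} :
      Typed (a :: Γ) r b → Typed Γ (Tm.abs a r) (Ty.arr a b)

/-- One-step (β) reduction. -/
inductive Step : Tm → Tm → Prop
  | beta {a : Ty} {r m : Tm} : Step (Tm.app (Tm.abs a r) m) (subst0 m r)
  | appl {m m' n : Tm} : Step m m' → Step (Tm.app m n) (Tm.app m' n)
  | appr {m n n' : Tm} : Step n n' → Step (Tm.app m n) (Tm.app m n')
  | abs {a : Ty} {r r' : Tm} : Step r r' → Step (Tm.abs a r) (Tm.abs a r')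

/-- Strong normalization. -/
inductive SN : Tm → Prop
  | intro {M : Tm} : (∀ M', Step M M' → SN M') → SN M

/-- Tait-style reducibility, by recursion on the type. -/
def Red : Tm → Ty → Prop
  | M, Ty.iota => Typed [] M Ty.iota ∧ SN M
  | M, Ty.arr a b => Typed [] M (Ty.arr a b) ∧ ∀ U, Red U a → Red (Tm.app M U) b


def Neutral : Tm → Prop
  | Tm.abs _ _ => False
  | _ => True

lemma typed_rename {Γ Δ : List Ty} {ρ : ℕ → ℕ} {t : Tm} {a : Ty}
    (h : Typed Γ t a) (hρ : ∀ n b, Γ[n]? = some b → Δ[ρ n]? = some b) :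
    Typed Δ (rename ρ t) a := by
  induction h generalizing Δ ρ with
  | var hg => exact Typed.var (hρ _ _ hg)
  | const => exact Typed.const
  | app _ _ ih1 ih2 => exact Typed.app (ih1 hρ) (ih2 hρ)
  | @abs Γ r a b _ ih =>
    refine Typed.abs (ih ?_)
    intro n c hn
    cases n with
    | zero => simpa [liftRen] using hn
    | succ k => simpa [liftRen] using hρ k c (by simpa using hn)

lemma typed_subst {Γ Δ : List Ty} {σ : ℕ → Tm} {t : Tm} {a : Ty}
    (h : Typed Γ t a) (hσ : ∀ n b, Γ[n]? = some b → Typed Δ (σ n) b) :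
    Typed Δ (subst σ t) a := by
  induction h generalizing Δ σ with
  | var hg => exact hσ _ _ hg
  | const => exact Typed.const
  | app _ _ ih1 ih2 => exact Typed.app (ih1 hσ) (ih2 hσ)
  | @abs Γ r a b _ ih =>
    refine Typed.abs (ih ?_)
    intro n c hn
    cases n with
    | zero => exact Typed.var (by simpa using hn)
    | succ k =>
      have := hσ k c (by simpa using hn)
      simpa [liftSub] using typed_rename this (by intro n b hb; simpa using hb)

lemma typed_subst0 {Γ : List Ty} {r m : Tm} {a b : Ty}
    (hr : Typed (a :: Γ) r b) (hm : Typed Γ m a) : Typed Γ (subst0 m r) b := by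
  refine typed_subst hr ?_
  intro n c hn
  cases n with
  | zero => cases hn; exact hm
  | succ k => exact Typed.var (by simpa using hn)

lemma subject_reduction {Γ : List Ty} {t t' : Tm} {a : Ty}
    (hs : Step t t') (ht : Typed Γ t a) : Typed Γ t' a := by
  induction hs generalizing Γ a with
  | beta =>
    cases ht with
    | app h1 h2 => cases h1 with
      | abs h3 => exact typed_subst0 h3 h2
  | appl _ ih => cases ht with
    | app h1 h2 => exact Typed.app (ih h1) h2
  | appr _ ih => cases ht with
    | app h1 h2 => exact Typed.app h1 (ih h2)
  | abs _ ih => cases ht with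
    | abs h1 => exact Typed.abs (ih h1)

lemma sn_step {M M' : Tm} (h : SN M) (hs : Step M M') : SN M' := by
  cases h with
  | intro h => exact h _ hs

lemma sn_app_left {M N : Tm} (h : SN (Tm.app M N)) : SN M := by
  generalize ht : Tm.app M N = t at h
  induction h generalizing M N with
  | @intro t h ih =>
    subst ht
    refine SN.intro (fun M' hs => ?_)
    exact ih _ (Step.appl hs) rfl

lemma red_typed {M : Tm} {A : Ty} (h : Red M A) : Typed [] M A := by
  cases A <;> exact h.1

lemma sn_const : SN Tm.const := SN.intro (fun M' hs => by cases hs)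

lemma cr_all (A : Ty) :
    (∀ M, Red M A → SN M) ∧
    (∀ M M', Red M A → Step M M' → Red M' A) ∧
    (∀ M, Neutral M → Typed [] M A → (∀ M', Step M M' → Red M' A) → Red M A) := by
  induction A with
  | iota =>
    refine ⟨fun M h => h.2, fun M M' h hs => ⟨subject_reduction hs h.1, sn_step h.2 hs⟩,
      fun M _ ht hred => ⟨ht, SN.intro (fun M' hs => (hred M' hs).2)⟩⟩
  | arr a b iha ihb =>
    obtain ⟨cr1a, cr2a, cr3a⟩ := iha
    obtain ⟨cr1b, cr2b, cr3b⟩ := ihb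
    have redconst : Red Tm.const a :=
      cr3a _ trivial Typed.const (fun M' hs => by cases hs)
    refine ⟨?_, ?_, ?_⟩
    · intro M h
      have : SN (Tm.app M Tm.const) := cr1b _ (h.2 _ redconst)
      exact sn_app_left this
    · intro M M' h hs
      exact ⟨subject_reduction hs h.1, fun U hU => cr2b _ _ (h.2 U hU) (Step.appl hs)⟩
    · intro M hne ht hred
      refine ⟨ht, fun U hU => ?_⟩
      have hsnU : SN U := cr1a _ hU
      revert hU
      induction hsnU with
      | @intro U _ ih =>
        intro hU
        refine cr3b _ trivial (Typed.app ht (red_typed hU)) ?_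
        intro X hs
        cases hs with
        | beta => exact absurd hne (by simp [Neutral])
        | appl h1 => exact (hred _ h1).2 U hU
        | appr h1 => exact ih _ h1 (cr2a _ _ hU h1)


theorem cr1 {M : Tm} {A : Ty} (h : Red M A) : SN M :=
  (cr_all A).1 M h
end
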